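/- A finite group $G$ is almost complete (i.e., center-free and the natural surjection $\mathrm{Aut}(G) \to \mathrm{Out}(G)$ admits a group-theoretic section) if and only if every short exact sequence of groups $1 \to G \to E \to Q \to 1$ (with $E$ any group) splits, i.e., admits a homomorphic section $Q \to E$. -/
import Mathlib


/-- The subgroup of inner automorphisms of a group `G`. -/
def Inn (G : Type*) [Group G] : Subgroup (MulAut G) :=
  (MulAut.conj : G →* MulAut G).range

instance Inn.normal (G : Type*) [Group G] : (Inn G).Normal := by
  constructor
  rintro x ⟨g, rfl⟩ φ
  refine ⟨φ g, ?_⟩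
  ext h
  show MulAut.conj (φ g) h = (φ * MulAut.conj g * φ⁻¹) h
  simp [MulAut.conj_apply, MulAut.mul_apply, map_mul, map_inv]

/-- A group `G` is *almost complete* if it is center-free and the natural surjection
`Aut(G) → Out(G) = Aut(G)/Inn(G)` admits a group-theoretic section. -/
def AlmostComplete (G : Type*) [Group G] : Prop :=
  Subgroup.center G = ⊥ ∧
    ∃ s : (MulAut G ⧸ Inn G) →* MulAut G,
      (QuotientGroup.mk' (Inn G)).comp s = MonoidHom.id (MulAut G ⧸ Inn G)

lemma mulAutConj_eq_one_iff {G : Type*} [Group G] (a : G) :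
    MulAut.conj a = 1 ↔ a ∈ Subgroup.center G := by
  rw [Subgroup.mem_center_iff]
  constructor
  · intro h g
    have this : a * g * a⁻¹ = g := by
      have := congrArg (fun φ : MulAut G => φ g) h
      simpa using this
    rw [mul_inv_eq_iff_eq_mul] at this
    exact this.symm
  · intro h
    ext g
    simp only [MulAut.conj_apply, MulAut.one_apply]
    rw [mul_inv_eq_iff_eq_mul]
    exact (h g).symm

theorem forward_dir {G E Q : Type*} [Group G] [Group E] [Group Q]
    (hAC : AlmostComplete G) (f : G →* E) (g : E →* Q)
    (hf : Function.Injective f) (hg : Function.Surjective g) (hfg : f.range = g.ker) :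
    ∃ s : Q →* E, g.comp s = MonoidHom.id Q := by
  obtain ⟨hZ, s, hs⟩ := hAC
  have hsec : ∀ x : MulAut G ⧸ Inn G, QuotientGroup.mk' (Inn G) (s x) = x := fun x =>
    congrArg (fun h => h x) hs
  haveI : f.range.Normal := by rw [hfg]; infer_instance
  set F : G ≃* f.range := MonoidHom.ofInjective hf with hF
  let Φ : E →* MulAut G :=
    { toFun := fun e => (F.trans (MulAut.conjNormal e)).trans F.symm
      map_one' := by
        ext x
        simp [MulEquiv.trans_apply]
      map_mul' := by
        intro e₁ e₂
        ext x
        simp [MulEquiv.trans_apply, MulAut.mul_apply, map_mul] }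
  have key : ∀ a : G, Φ (f a) = MulAut.conj a := by
    intro a
    ext x
    show F.symm (MulAut.conjNormal (f a) (F x)) = a * x * a⁻¹
    have h1 : MulAut.conjNormal (f a) (F x) = F (a * x * a⁻¹) := by
      apply Subtype.ext
      rw [MulAut.conjNormal_apply]
      simp [hF, MonoidHom.ofInjective_apply]
    rw [h1, MulEquiv.symm_apply_apply]
  let π := QuotientGroup.mk' (Inn G)
  let Ψ : E →* MulAut G := s.comp (π.comp Φ)
  let K : Subgroup E := Φ.eqLocus Ψ
  have hπΨ : ∀ e : E, π (Ψ e) = π (Φ e) := fun e => hsec (π (Φ e))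
  -- surjectivity
  have hsurj : ∀ q : Q, ∃ k ∈ K, g k = q := by
    intro q
    obtain ⟨e, he⟩ := hg q
    have hα : Φ e * (Ψ e)⁻¹ ∈ Inn G := by
      rw [← QuotientGroup.ker_mk' (Inn G), MonoidHom.mem_ker, map_mul, map_inv, hπΨ,
        mul_inv_cancel]
    obtain ⟨a, ha⟩ := hα
    refine ⟨(f a)⁻¹ * e, ?_, ?_⟩
    · show Φ ((f a)⁻¹ * e) = Ψ ((f a)⁻¹ * e)
      have hΨfa : Ψ (f a) = 1 := by
        show s (π (Φ (f a))) = 1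
        rw [key]
        have hπ : π (MulAut.conj a) = 1 := by
          rw [← MonoidHom.mem_ker, QuotientGroup.ker_mk']
          exact ⟨a, rfl⟩
        rw [hπ, map_one]
      rw [map_mul, map_inv, map_mul, map_inv, key, ha, hΨfa]
      group
    · have : f a ∈ g.ker := hfg ▸ ⟨a, rfl⟩
      rw [map_mul, map_inv, MonoidHom.mem_ker.mp this, inv_one, one_mul, he]
  -- injectivity
  have hinj : Function.Injective (g.comp K.subtype) := by
    rw [injective_iff_map_eq_one]
    rintro ⟨k, hk⟩ h1
    have hker : k ∈ g.ker := h1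
    rw [← hfg] at hker
    obtain ⟨a, ha⟩ := hker
    have hΦk : Φ k = MulAut.conj a := by rw [← ha, key]
    have hΨk : Ψ k = 1 := by
      show s (π (Φ k)) = 1
      have : π (Φ k) = 1 := by
        rw [← MonoidHom.mem_ker, QuotientGroup.ker_mk']
        rw [hΦk]; exact ⟨a, rfl⟩
      rw [this, map_one]
    have : MulAut.conj a = 1 := by rw [← hΦk, hk, hΨk]
    rw [mulAutConj_eq_one_iff, hZ, Subgroup.mem_bot] at this
    subst this
    apply Subtype.ext
    simpa using ha.symm
  have hbij : Function.Bijective (g.comp K.subtype) := by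
    refine ⟨hinj, fun q => ?_⟩
    obtain ⟨k, hk, hgk⟩ := hsurj q
    exact ⟨⟨k, hk⟩, hgk⟩
  let eqv := MulEquiv.ofBijective _ hbij
  refine ⟨K.subtype.comp eqv.symm.toMonoidHom, ?_⟩
  ext q
  show g (K.subtype (eqv.symm q)) = q
  have : (g.comp K.subtype) (eqv.symm q) = eqv (eqv.symm q) := rfl
  rw [show g (K.subtype (eqv.symm q)) = (g.comp K.subtype) (eqv.symm q) from rfl, this,
    MulEquiv.apply_symm_apply]


universe u

set_option maxHeartbeats 800000 in
theorem center_bot {G : Type u} [Group G] [Finite G]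
    (h : ∀ (E Q : Type u) (_ : Group E) (_ : Group Q) (f : G →* E) (g : E →* Q),
        Function.Injective f → Function.Surjective g → f.range = g.ker →
          ∃ s : Q →* E, g.comp s = MonoidHom.id Q) :
    Subgroup.center G = ⊥ := by
  by_contra hc
  -- Step 1: find a central element z with z ^ p = 1, z ≠ 1, p prime.
  obtain ⟨w, hwc, hw1⟩ : ∃ w, w ∈ Subgroup.center G ∧ w ≠ 1 := by
    by_contra hcon
    push_neg at hcon
    exact hc (Subgroup.eq_bot_iff_forall _ |>.mpr hcon)
  have hd1 : orderOf w ≠ 1 := fun hh => hw1 (orderOf_eq_one_iff.mp hh)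
  have hd0 : 0 < orderOf w := orderOf_pos w
  set p := (orderOf w).minFac with hpdef
  have hp : p.Prime := Nat.minFac_prime hd1
  set z := w ^ (orderOf w / p) with hzdef
  have hzc : z ∈ Subgroup.center G := Subgroup.pow_mem _ hwc _
  have hzp : z ^ p = 1 := by
    rw [hzdef, ← pow_mul, Nat.div_mul_cancel (Nat.minFac_dvd _)]
    exact pow_orderOf_eq_one w
  have hz1 : z ≠ 1 := by
    intro hz
    have hdvd : orderOf w ∣ orderOf w / p := orderOf_dvd_of_pow_eq_one hz
    have hpos : 0 < orderOf w / p := Nat.div_pos (Nat.minFac_le hd0) hp.pos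
    have := Nat.le_of_dvd hpos hdvd
    have := Nat.div_lt_self hd0 hp.one_lt
    omega
  clear hzdef hd1 hd0 hw1 hwc hpdef
  -- Step 2: the construction
  set K := Nat.card G with hKdef
  have hK0 : 0 < K := Nat.card_pos
  set m0 := p ^ K with hm0def
  set M := p ^ (K + 1) with hMdef
  have hMm0 : M = m0 * p := by rw [hMdef, hm0def, pow_succ]
  haveI : NeZero m0 := ⟨pow_ne_zero _ hp.pos.ne'⟩
  haveI : NeZero M := ⟨pow_ne_zero _ hp.pos.ne'⟩
  have hdvd : m0 ∣ M := by rw [hm0def, hMdef]; exact pow_dvd_pow p (Nat.le_succ K)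
  set C := Multiplicative (ZMod M) with hCdef
  set ζ : G × C := (z⁻¹, Multiplicative.ofAdd ((m0 : ZMod M))) with hζdef
  have hζcomm : ∀ x : G × C, x * ζ = ζ * x := by
    rintro ⟨x1, x2⟩
    exact Prod.ext (Subgroup.mem_center_iff.mp (Subgroup.inv_mem _ hzc) x1) (mul_comm _ _)
  set N : Subgroup (G × C) := Subgroup.zpowers ζ with hNdef
  haveI hNnormal : N.Normal := by
    constructor
    intro n hn g
    obtain ⟨j, rfl⟩ := Subgroup.mem_zpowers_iff.mp hn
    have hcomm : g * ζ ^ j = ζ ^ j * g := (Commute.zpow_right (hζcomm g) j).eq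
    have heq : g * ζ ^ j * g⁻¹ = ζ ^ j := by rw [hcomm, mul_assoc, mul_inv_cancel, mul_one]
    rw [heq]
    exact Subgroup.zpow_mem _ (Subgroup.mem_zpowers ζ) j
  set E := (G × C) ⧸ N with hEdef
  set fE : G →* E := (QuotientGroup.mk' N).comp (MonoidHom.inl G C) with hfEdef
  set φ : G × C →* Multiplicative (ZMod m0) :=
    (AddMonoidHom.toMultiplicative
      ((ZMod.castHom hdvd (ZMod m0)).toAddMonoidHom)).comp (MonoidHom.snd G C) with hφdef
  have hφ_apply : ∀ x : G × C,
      φ x = Multiplicative.ofAdd ((ZMod.castHom hdvd (ZMod m0)) (Multiplicative.toAdd x.2)) :=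
    fun x => rfl
  have hφζ : φ ζ = 1 := by
    rw [hφ_apply]
    simp only [hζdef, toAdd_ofAdd, map_natCast, ZMod.natCast_self, ofAdd_zero]
  have hNker : N ≤ φ.ker := by
    rintro n hn
    obtain ⟨j, rfl⟩ := Subgroup.mem_zpowers_iff.mp hn
    rw [MonoidHom.mem_ker, map_zpow, hφζ, one_zpow]
  set gE : E →* Multiplicative (ZMod m0) := QuotientGroup.lift N φ hNker with hgEdef
  have hgE_mk : ∀ x : G × C, gE (QuotientGroup.mk x) = φ x := fun x => rfl
  -- f is injective
  have hfinj : Function.Injective fE := by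
    rw [injective_iff_map_eq_one]
    intro a ha
    have hmem : ((a, 1) : G × C) ∈ N := by
      rw [← QuotientGroup.eq_one_iff]
      exact ha
    obtain ⟨j, hj⟩ := Subgroup.mem_zpowers_iff.mp hmem
    have hj2 : (Multiplicative.ofAdd ((m0 : ZMod M))) ^ j = (1 : C) := congrArg Prod.snd hj
    have hj1 : (z⁻¹) ^ j = a := congrArg Prod.fst hj
    -- from hj2 : (M : ℤ) ∣ j * m0, hence p ∣ j
    have hzmod : ((j * (m0 : ℤ) : ℤ) : ZMod M) = 0 := by
      have := congrArg Multiplicative.toAdd hj2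
      rw [toAdd_zpow, toAdd_ofAdd, toAdd_one] at this
      rw [← this, zsmul_eq_mul]
      push_cast
      ring
    rw [ZMod.intCast_zmod_eq_zero_iff_dvd] at hzmod
    have hpj : (p : ℤ) ∣ j := by
      have hM' : (M : ℤ) = (m0 : ℤ) * p := by exact_mod_cast hMm0
      rw [hM'] at hzmod
      have hm0ne : (m0 : ℤ) ≠ 0 := by exact_mod_cast (NeZero.ne m0)
      rw [mul_comm (j : ℤ) (m0 : ℤ)] at hzmod
      exact (mul_dvd_mul_iff_left hm0ne).mp hzmod
    obtain ⟨u, hu⟩ := hpj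
    rw [← hj1, hu, zpow_mul, inv_zpow]
    rw [show ((p : ℤ)) = ((p : ℕ) : ℤ) from rfl, zpow_natCast, hzp, inv_one, one_zpow]
  -- g is surjective
  have hgsurj : Function.Surjective gE := by
    intro y
    refine ⟨QuotientGroup.mk (1, Multiplicative.ofAdd (((Multiplicative.toAdd y).val : ℕ) : ZMod M)), ?_⟩
    rw [hgE_mk, hφ_apply, toAdd_ofAdd, map_natCast, ZMod.natCast_val, ZMod.cast_id,
      ofAdd_toAdd]
  -- range f = ker g
  have hrange : fE.range = gE.ker := by
    apply le_antisymm
    · rintro x ⟨a, rfl⟩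
      rw [MonoidHom.mem_ker]
      show gE (QuotientGroup.mk (a, 1)) = 1
      rw [hgE_mk, hφ_apply]
      simp
    · intro x hx
      obtain ⟨⟨a, ww⟩, rfl⟩ := QuotientGroup.mk'_surjective N x
      rw [MonoidHom.mem_ker] at hx
      have hx' : ((ZMod.castHom hdvd (ZMod m0)) (Multiplicative.toAdd ww)) = 0 := by
        have := hx
        rw [show (QuotientGroup.mk' N) ((a, ww)) = QuotientGroup.mk ((a, ww)) from rfl] at this
        rw [hgE_mk, hφ_apply] at this
        have := congrArg Multiplicative.toAdd this
        simpa using this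
      have hval : m0 ∣ (Multiplicative.toAdd ww).val := by
        rw [ZMod.castHom_apply, ← ZMod.natCast_val, ZMod.natCast_eq_zero_iff] at hx'
        exact hx'
      obtain ⟨r, hr⟩ := hval
      refine ⟨a * z ^ r, ?_⟩
      show QuotientGroup.mk ((a * z ^ r, 1) : G × C) = QuotientGroup.mk ((a, ww))
      rw [QuotientGroup.eq]
      have hcompute : ((a * z ^ r, 1) : G × C)⁻¹ * (a, ww) = ζ ^ (r : ℤ) := by
        refine Prod.ext ?_ ?_
        · show (a * z ^ r)⁻¹ * a = (ζ ^ (r : ℤ)).1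
          have h1 : (ζ ^ (r : ℤ)).1 = (z⁻¹) ^ (r : ℤ) := rfl
          have h2 : (a * z ^ r)⁻¹ * a = (z ^ r)⁻¹ := by group
          rw [h1, h2, zpow_natCast, inv_pow]
        · show 1⁻¹ * ww = (ζ ^ (r : ℤ)).2
          have h2 : (ζ ^ (r : ℤ)).2 = (Multiplicative.ofAdd ((m0 : ZMod M))) ^ (r : ℤ) := rfl
          rw [h2, inv_one, one_mul]
          apply Multiplicative.toAdd.injective
          rw [toAdd_zpow, toAdd_ofAdd, zsmul_eq_mul]
          have : Multiplicative.toAdd ww = (((Multiplicative.toAdd ww).val : ℕ) : ZMod M) := by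
            rw [ZMod.natCast_val, ZMod.cast_id]
          rw [this, hr]
          push_cast
          ring
      rw [hcompute]
      exact Subgroup.zpow_mem _ (Subgroup.mem_zpowers ζ) _
  -- Step 3: apply the splitting hypothesis (via ULift to fix universes)
  set QU := ULift.{u} (Multiplicative (ZMod m0)) with hQUdef
  set eqv : QU ≃* Multiplicative (ZMod m0) := MulEquiv.ulift with heqvdef
  set gE' : E →* QU := eqv.symm.toMonoidHom.comp gE with hgE'def
  have hgE'_apply : ∀ x : E, gE' x = eqv.symm (gE x) := fun _ => rfl
  have hgsurj' : Function.Surjective gE' := by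
    intro q
    obtain ⟨x, hx⟩ := hgsurj (eqv q)
    exact ⟨x, by rw [hgE'_apply, hx, MulEquiv.symm_apply_apply]⟩
  have hker' : fE.range = gE'.ker := by
    rw [hrange]
    ext x
    rw [MonoidHom.mem_ker, MonoidHom.mem_ker, hgE'_apply]
    constructor
    · intro hx; rw [hx, map_one]
    · intro hx
      have := congrArg eqv hx
      rwa [MulEquiv.apply_symm_apply, map_one] at this
  obtain ⟨s, hs⟩ := h E QU _ _ fE gE' hfinj hgsurj' hker'
  have hsec : ∀ y : Multiplicative (ZMod m0), gE (s (eqv.symm y)) = y := by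
    intro y
    have h1 : gE' (s (eqv.symm y)) = eqv.symm y := congrArg (fun t => t (eqv.symm y)) hs
    rw [hgE'_apply] at h1
    have := congrArg eqv h1
    rwa [MulEquiv.apply_symm_apply, MulEquiv.apply_symm_apply] at this
  -- Step 4: derive the contradiction
  set q₁ : Multiplicative (ZMod m0) := Multiplicative.ofAdd (1 : ZMod m0) with hq₁def
  obtain ⟨⟨a, ww⟩, hmk⟩ := QuotientGroup.mk'_surjective N (s (eqv.symm q₁))
  have hmk' : QuotientGroup.mk ((a, ww) : G × C) = s (eqv.symm q₁) := hmk
  set t := Multiplicative.toAdd ww with htdef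
  have ht1 : ((t.val : ℕ) : ZMod m0) = 1 := by
    have h1 : gE (s (eqv.symm q₁)) = q₁ := hsec q₁
    rw [← hmk', hgE_mk, hφ_apply] at h1
    have h2 := congrArg Multiplicative.toAdd h1
    rw [toAdd_ofAdd] at h2
    rw [ZMod.castHom_apply, ← ZMod.natCast_val] at h2
    exact h2
  have hpm0 : (p : ℤ) ∣ (m0 : ℤ) := by exact_mod_cast (dvd_pow_self p hK0.ne' : p ∣ p ^ K)
  have hptv : (p : ℤ) ∣ (t.val : ℤ) - 1 := by
    have hmod : t.val ≡ 1 [MOD m0] := by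
      rw [← ZMod.natCast_eq_natCast_iff]
      rw [ht1, Nat.cast_one]
    have : (m0 : ℤ) ∣ (1 : ℤ) - (t.val : ℤ) := by
      have := hmod.dvd
      simpa using this
    have h3 := hpm0.trans this
    rw [show (t.val : ℤ) - 1 = -(1 - (t.val : ℤ)) by ring]
    exact dvd_neg.mpr h3
  have hq1pow : q₁ ^ m0 = 1 := by
    apply Multiplicative.toAdd.injective
    rw [toAdd_pow, toAdd_ofAdd, toAdd_one, nsmul_eq_mul, mul_one, ZMod.natCast_self]
  have hpow : (QuotientGroup.mk ((a, ww) : G × C) : E) ^ m0 = 1 := by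
    rw [hmk', ← map_pow]
    have : (eqv.symm q₁) ^ m0 = 1 := by rw [← map_pow, hq1pow, map_one]
    rw [this, map_one]
  have hmemN : ((a, ww) : G × C) ^ m0 ∈ N := by
    rw [← QuotientGroup.eq_one_iff, QuotientGroup.mk_pow]
    exact hpow
  obtain ⟨j, hj⟩ := Subgroup.mem_zpowers_iff.mp hmemN
  have hj1 : (z⁻¹) ^ j = a ^ m0 := congrArg Prod.fst hj
  have hj2 : (Multiplicative.ofAdd ((m0 : ZMod M))) ^ j = ww ^ m0 := congrArg Prod.snd hj
  have hjt : (p : ℤ) ∣ j - (t.val : ℤ) := by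
    have h2 := congrArg Multiplicative.toAdd hj2
    rw [toAdd_zpow, toAdd_pow, toAdd_ofAdd, zsmul_eq_mul, nsmul_eq_mul] at h2
    have hteq : t = ((t.val : ℕ) : ZMod M) := by rw [ZMod.natCast_val, ZMod.cast_id]
    have hz0 : ((j * (m0 : ℤ) - (m0 : ℤ) * (t.val : ℤ) : ℤ) : ZMod M) = 0 := by
      push_cast
      rw [h2, ← hteq]
      ring
    rw [ZMod.intCast_zmod_eq_zero_iff_dvd] at hz0
    have hM' : (M : ℤ) = (m0 : ℤ) * p := by exact_mod_cast hMm0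
    rw [hM'] at hz0
    have hfac : j * (m0 : ℤ) - (m0 : ℤ) * (t.val : ℤ) = (m0 : ℤ) * (j - (t.val : ℤ)) := by ring
    rw [hfac] at hz0
    have hm0ne : (m0 : ℤ) ≠ 0 := by exact_mod_cast (NeZero.ne m0)
    exact (mul_dvd_mul_iff_left hm0ne).mp hz0
  have hpj1 : (p : ℤ) ∣ j - 1 := by
    have := dvd_add hjt hptv
    simpa using this
  -- the order argument
  set m := Nat.card G / p ^ ((Nat.card G).factorization p) with hmdef
  have hcard0 : Nat.card G ≠ 0 := hK0.ne'
  have hpm : ¬ (p : ℕ) ∣ m := (Nat.Prime.coprime_iff_not_dvd hp).mp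
    (Nat.coprime_ordCompl hp hcard0)
  have hcarddvd : Nat.card G ∣ m0 * m := by
    have hfle : (Nat.card G).factorization p ≤ K :=
      le_of_lt (hKdef ▸ Nat.factorization_lt p hcard0)
    calc Nat.card G = p ^ ((Nat.card G).factorization p) * m :=
          (Nat.ordProj_mul_ordCompl_eq_self _ p).symm
      _ ∣ m0 * m := mul_dvd_mul (hm0def ▸ pow_dvd_pow p hfle) dvd_rfl
  have ham : a ^ (m0 * m) = 1 :=
    orderOf_dvd_iff_pow_eq_one.mp ((orderOf_dvd_natCard a).trans hcarddvd)
  have hzj : (z⁻¹ : G) ^ (j * (m : ℤ)) = 1 := by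
    rw [zpow_mul, hj1, zpow_natCast, ← pow_mul, ham]
  have hordz : orderOf (z⁻¹ : G) = p := by
    rw [orderOf_inv]
    rcases hp.eq_one_or_self_of_dvd _ (orderOf_dvd_of_pow_eq_one hzp) with h1 | h1
    · exact absurd (orderOf_eq_one_iff.mp h1) hz1
    · exact h1
  have hpjm : (p : ℤ) ∣ j * m := by
    have := orderOf_dvd_iff_zpow_eq_one.mpr hzj
    rwa [hordz] at this
  have hpj : (p : ℤ) ∣ j := by
    rcases (Int.Prime.dvd_mul' (by exact_mod_cast hp) hpjm) with h1 | h1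
    · exact h1
    · exfalso
      apply hpm
      exact_mod_cast h1
  have hone : (p : ℤ) ∣ 1 := by
    have := dvd_sub hpj hpj1
    simpa using this
  have : (p : ℕ) ∣ 1 := by exact_mod_cast hone
  exact (Nat.Prime.one_lt hp).not_ge (Nat.le_of_dvd one_pos this)


/-- A finite group `G` is almost complete if and only if every short exact
sequence of groups `1 → G → E → Q → 1` splits, i.e. admits a homomorphic section `Q → E`. -/
theorem statement2 (G : Type u) [Group G] [Finite G] :
    AlmostComplete G ↔
      ∀ (E Q : Type u) (_ : Group E) (_ : Group Q) (f : G →* E) (g : E →* Q),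
        Function.Injective f → Function.Surjective g → f.range = g.ker →
          ∃ s : Q →* E, g.comp s = MonoidHom.id Q := by
  constructor
  · intro hAC E Q instE instQ f g hf hg hfg
    letI := instE; letI := instQ
    exact forward_dir hAC f g hf hg hfg
  · intro h
    have hZ := center_bot h
    refine ⟨hZ, ?_⟩
    have hinj : Function.Injective (MulAut.conj : G →* MulAut G) := by
      rw [injective_iff_map_eq_one]
      intro a ha
      have := (mulAutConj_eq_one_iff a).mp ha
      rwa [hZ, Subgroup.mem_bot] at this
    have hrange : (MulAut.conj : G →* MulAut G).range =
        (QuotientGroup.mk' (Inn G)).ker := by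
      rw [QuotientGroup.ker_mk']
      rfl
    exact h (MulAut G) (MulAut G ⧸ Inn G) _ _ (MulAut.conj : G →* MulAut G)
      (QuotientGroup.mk' (Inn G)) hinj (QuotientGroup.mk'_surjective (Inn G)) hrange
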